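/- Let 𝒳 = 𝒴 with |𝒳| = n ≥ 2, Q(x) = 1/n, and let Ŵ be the modulo-additive estimated channel Ŵ(y|x) = p̄ if y = x and Ŵ(y|x) = p if y ≠ x, where 0 < p < 1/n and p̄ = 1 − (n−1)p (so p̄ > p). Then for every s ≥ 0: (i) I^ML_{s,0} = log( n / ( p̄^s + (1−p̄) p^{s−1} ) ) + s ( p̄ log p̄ + (1−p̄) log p ); (ii) V_{s,0} = s² p̄ (1−p̄) (log(p̄/p))²; and (iii) for s > 0 and 0 ≤ r ≤ p̄ / (2(1−p̄)), the minimizer W̃*_{s,0}(y|x) = Ŵ(y|x)(1 − √(2r) φ_{s,0}(x,y)) of Σ_{x,y} Q(x)P(y|x) i_{s,0}(x,y) over the chi-squared ball B̃(Ŵ,r) is again a modulo-additive channel, with off-diagonal entries q = p ( 1 + √(2r) · √( p̄/(1−p̄) ) ) and diagonal entries 1 − (n−1)q, and it is a valid conditional pmf exactly when r ≤ p̄ / (2(1−p̄)). -/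

import Mathlib

open Real Filter

variable {𝓧 𝓨 : Type*} [Fintype 𝓧] [Fintype 𝓨]

/-- Mismatched information density `i_{s,a}(x,y)`. -/
noncomputable def iDen (Q : 𝓧 → ℝ) (Wh : 𝓧 → 𝓨 → ℝ) (s : ℝ) (a : 𝓧 → ℝ) (x : 𝓧) (y : 𝓨) : ℝ :=
  Real.log ((Wh x y ^ s * Real.exp (a x)) / ∑ x' : 𝓧, Q x' * Wh x' y ^ s * Real.exp (a x'))

/-- `I^ML_{s,a}`. -/
noncomputable def IML (Q : 𝓧 → ℝ) (Wh : 𝓧 → 𝓨 → ℝ) (s : ℝ) (a : 𝓧 → ℝ) : ℝ :=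
  ∑ x : 𝓧, ∑ y : 𝓨, Q x * Wh x y * iDen Q Wh s a x y

/-- `V_{s,a}`. -/
noncomputable def Vsa (Q : 𝓧 → ℝ) (Wh : 𝓧 → 𝓨 → ℝ) (s : ℝ) (a : 𝓧 → ℝ) : ℝ :=
  ∑ x : 𝓧, Q x * ((∑ y : 𝓨, Wh x y * (iDen Q Wh s a x y) ^ 2)
    - (∑ y : 𝓨, Wh x y * iDen Q Wh s a x y) ^ 2)

/-- `φ_{s,a}(x,y)`. -/
noncomputable def phiSA (Q : 𝓧 → ℝ) (Wh : 𝓧 → 𝓨 → ℝ) (s : ℝ) (a : 𝓧 → ℝ) (x : 𝓧) (y : 𝓨) : ℝ :=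
  (iDen Q Wh s a x y - ∑ y' : 𝓨, Wh x y' * iDen Q Wh s a x y') / Real.sqrt (Vsa Q Wh s a)

/-- Worst-case channel `W̃*_{s,a}` at radius `r`. -/
noncomputable def Wstar (Q : 𝓧 → ℝ) (Wh : 𝓧 → 𝓨 → ℝ) (s : ℝ) (a : 𝓧 → ℝ) (r : ℝ) :
    𝓧 → 𝓨 → ℝ :=
  fun x y => Wh x y * (1 - Real.sqrt (2 * r) * phiSA Q Wh s a x y)

/-- Conditional pmf on `𝓨` given `𝓧`. -/
def IsCondPMF (P : 𝓧 → 𝓨 → ℝ) : Prop :=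
  (∀ x y, 0 ≤ P x y) ∧ ∀ x, ∑ y : 𝓨, P x y = 1

/-- Chi-squared ball `B̃(Ŵ, r)`. -/
def chiBall (Q : 𝓧 → ℝ) (Wh : 𝓧 → 𝓨 → ℝ) (r : ℝ) : Set (𝓧 → 𝓨 → ℝ) :=
  {P | IsCondPMF P ∧
    (1 / 2) * ∑ x : 𝓧, ∑ y : 𝓨, Q x * (P x y - Wh x y) ^ 2 / Wh x y ≤ r}

private lemma sumIteCard {𝓧 : Type*} [Fintype 𝓧] [DecidableEq 𝓧] (x : 𝓧) (a b : ℝ) :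
    ∑ y : 𝓧, (if y = x then a else b) = a + ((Fintype.card 𝓧 : ℝ) - 1) * b := by
  have h : ∀ y : 𝓧, (if y = x then a else b) = b + (if y = x then a - b else 0) := by
    intro y; split <;> ring
  simp_rw [h]
  rw [Finset.sum_add_distrib, Finset.sum_const, Finset.sum_ite_eq' Finset.univ x (fun _ => a - b)]
  simp [Finset.card_univ, nsmul_eq_mul]
  ring

private lemma sqrtAux1 {a b : ℝ} (ha : 0 < a) (hb : 0 < b) :
    b / Real.sqrt (a * b) = Real.sqrt (b / a) := by
  rw [Real.sqrt_mul ha.le, Real.sqrt_div hb.le]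
  rw [div_eq_div_iff (by positivity) (by positivity)]
  have h := Real.mul_self_sqrt hb.le
  nlinarith [Real.sqrt_nonneg a, Real.sqrt_nonneg b]

private lemma sqrtAux2 {a b : ℝ} (ha : 0 < a) (hb : 0 < b) :
    a * Real.sqrt (b / a) = Real.sqrt (a * b) := by
  rw [Real.sqrt_div hb.le, Real.sqrt_mul ha.le]
  have h := Real.mul_self_sqrt ha.le
  have h0 : Real.sqrt a ≠ 0 := by positivity
  field_simp
  nlinarith [Real.sqrt_nonneg a, Real.sqrt_nonneg b]

/-- Modulo-additive estimated channel: closed forms of `I^ML_{s,0}` and `V_{s,0}`, and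
the worst-case channel in the chi-squared ball is again modulo-additive. -/
theorem stmt12 {𝓧 : Type*} [Fintype 𝓧] [DecidableEq 𝓧] [Nonempty 𝓧]
    (n : ℕ) (hn : Fintype.card 𝓧 = n) (h2 : 2 ≤ n)
    (p : ℝ) (hp : 0 < p) (hpn : p < 1 / (n : ℝ))
    (pbar : ℝ) (hpbar : pbar = 1 - ((n : ℝ) - 1) * p)
    (Q : 𝓧 → ℝ) (hQ : ∀ x, Q x = (n : ℝ)⁻¹)
    (Wh : 𝓧 → 𝓧 → ℝ) (hWh : ∀ x y, Wh x y = if y = x then pbar else p) :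
    ∀ s : ℝ, 0 ≤ s →
      (IML Q Wh s (fun _ => 0)
          = Real.log ((n : ℝ) / (pbar ^ s + (1 - pbar) * p ^ (s - 1)))
            + s * (pbar * Real.log pbar + (1 - pbar) * Real.log p)) ∧
      (Vsa Q Wh s (fun _ => 0)
          = s ^ 2 * pbar * (1 - pbar) * (Real.log (pbar / p)) ^ 2) ∧
      (0 < s → ∀ r : ℝ, 0 ≤ r →
        (∀ x y : 𝓧, Wstar Q Wh s (fun _ => 0) r x y
            = if y = x
              then 1 - ((n : ℝ) - 1) * (p * (1 + Real.sqrt (2 * r) * Real.sqrt (pbar / (1 - pbar))))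
              else p * (1 + Real.sqrt (2 * r) * Real.sqrt (pbar / (1 - pbar)))) ∧
        (IsCondPMF (Wstar Q Wh s (fun _ => 0) r) ↔ r ≤ pbar / (2 * (1 - pbar))) ∧
        (r ≤ pbar / (2 * (1 - pbar)) →
          Wstar Q Wh s (fun _ => 0) r ∈ chiBall Q Wh r ∧
          ∀ P ∈ chiBall Q Wh r,
            (∑ x : 𝓧, ∑ y : 𝓧, Q x * Wstar Q Wh s (fun _ => 0) r x y * iDen Q Wh s (fun _ => 0) x y)
              ≤ ∑ x : 𝓧, ∑ y : 𝓧, Q x * P x y * iDen Q Wh s (fun _ => 0) x y)) := by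
  intro s hs
  have hn2 : (2:ℝ) ≤ (n:ℝ) := by exact_mod_cast h2
  have hn0 : (0:ℝ) < (n:ℝ) := by linarith
  have hnp : (n:ℝ) * p < 1 := by
    have := (lt_div_iff₀ hn0).mp hpn; linarith
  have h1p : 0 < 1 - pbar := by rw [hpbar]; nlinarith
  have hpp : p < pbar := by rw [hpbar]; nlinarith
  have hpbar0 : 0 < pbar := hp.trans hpp
  have h1pe : 1 - pbar = ((n:ℝ) - 1) * p := by rw [hpbar]; ring
  obtain ⟨D, hD⟩ : ∃ D : ℝ, D = pbar ^ s + ((n:ℝ) - 1) * p ^ s := ⟨_, rfl⟩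
  have hDpos : 0 < D := by
    rw [hD]
    have := Real.rpow_pos_of_pos hpbar0 s
    have := Real.rpow_pos_of_pos hp s
    nlinarith
  have hden : ∀ y : 𝓧, ∑ x' : 𝓧, Q x' * Wh x' y ^ s * Real.exp ((fun _ : 𝓧 => (0:ℝ)) x')
      = (n:ℝ)⁻¹ * D := by
    intro y
    have h1 : ∀ x' : 𝓧, Q x' * Wh x' y ^ s * Real.exp ((fun _ : 𝓧 => (0:ℝ)) x')
        = if x' = y then (n:ℝ)⁻¹ * pbar ^ s else (n:ℝ)⁻¹ * p ^ s := by
      intro x'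
      simp only [Real.exp_zero, mul_one, hQ, hWh]
      rcases eq_or_ne x' y with h | h
      · subst h; simp
      · rw [if_neg (Ne.symm h), if_neg h]
    rw [Finset.sum_congr rfl (fun x' _ => h1 x'), sumIteCard y _ _, hn, hD]
    ring
  obtain ⟨A, hA⟩ : ∃ A : ℝ, A = Real.log (n:ℝ) + s * Real.log pbar - Real.log D := ⟨_, rfl⟩
  obtain ⟨B, hB⟩ : ∃ B : ℝ, B = Real.log (n:ℝ) + s * Real.log p - Real.log D := ⟨_, rfl⟩
  have hiDen : ∀ x y : 𝓧, iDen Q Wh s (fun _ => 0) x y = if y = x then A else B := by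
    intro x y
    rw [iDen, hden y, hWh, Real.exp_zero, mul_one]
    by_cases h : y = x
    · rw [if_pos h, if_pos h,
        Real.log_div (by positivity) (mul_pos (by positivity) hDpos).ne',
        Real.log_mul (by positivity) hDpos.ne', Real.log_inv, Real.log_rpow hpbar0, hA]
      ring
    · rw [if_neg h, if_neg h,
        Real.log_div (by positivity) (mul_pos (by positivity) hDpos).ne',
        Real.log_mul (by positivity) hDpos.ne', Real.log_inv, Real.log_rpow hp, hB]
      ring
  have hmean : ∀ x : 𝓧, ∑ y : 𝓧, Wh x y * iDen Q Wh s (fun _ => 0) x y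
      = pbar * A + ((n:ℝ) - 1) * p * B := by
    intro x
    have h1 : ∀ y : 𝓧, Wh x y * iDen Q Wh s (fun _ => 0) x y
        = if y = x then pbar * A else p * B := by
      intro y; rw [hWh, hiDen]; split <;> ring
    rw [Finset.sum_congr rfl fun y _ => h1 y, sumIteCard x _ _, hn]
    ring
  have hmean2 : ∀ x : 𝓧, ∑ y : 𝓧, Wh x y * (iDen Q Wh s (fun _ => 0) x y) ^ 2
      = pbar * A ^ 2 + ((n:ℝ) - 1) * p * B ^ 2 := by
    intro x
    have h1 : ∀ y : 𝓧, Wh x y * (iDen Q Wh s (fun _ => 0) x y) ^ 2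
        = if y = x then pbar * A ^ 2 else p * B ^ 2 := by
      intro y; rw [hWh, hiDen]; split <;> ring
    rw [Finset.sum_congr rfl fun y _ => h1 y, sumIteCard x _ _, hn]
    ring
  have hABd : A - B = s * (Real.log pbar - Real.log p) := by rw [hA, hB]; ring
  have h1 : pbar + ((n:ℝ) - 1) * p = 1 := by rw [hpbar]; ring
  have hIML : IML Q Wh s (fun _ => 0)
      = Real.log ((n : ℝ) / (pbar ^ s + (1 - pbar) * p ^ (s - 1)))
        + s * (pbar * Real.log pbar + (1 - pbar) * Real.log p) := by
    have hDr : pbar ^ s + (1 - pbar) * p ^ (s - 1) = D := by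
      rw [hD, h1pe, Real.rpow_sub hp, Real.rpow_one]
      field_simp
    have hrow : ∀ x : 𝓧, ∑ y : 𝓧, Q x * Wh x y * iDen Q Wh s (fun _ => 0) x y
        = (n:ℝ)⁻¹ * (pbar * A + ((n:ℝ) - 1) * p * B) := by
      intro x
      simp_rw [hQ, mul_assoc]
      rw [← Finset.mul_sum, hmean x]
      ring
    rw [IML, Finset.sum_congr rfl fun x _ => hrow x, Finset.sum_const, Finset.card_univ, hn,
      nsmul_eq_mul, ← mul_assoc, mul_inv_cancel₀ hn0.ne', one_mul, hDr,
      Real.log_div hn0.ne' hDpos.ne', hA, hB, h1pe]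
    linear_combination (Real.log (n:ℝ) - Real.log D) * h1
  have hVsa : Vsa Q Wh s (fun _ => 0)
      = s ^ 2 * pbar * (1 - pbar) * (Real.log (pbar / p)) ^ 2 := by
    have hrow : ∀ x : 𝓧, Q x * ((∑ y : 𝓧, Wh x y * (iDen Q Wh s (fun _ => 0) x y) ^ 2)
        - (∑ y : 𝓧, Wh x y * iDen Q Wh s (fun _ => 0) x y) ^ 2)
        = (n:ℝ)⁻¹ * (s ^ 2 * pbar * (1 - pbar) * (Real.log (pbar / p)) ^ 2) := by
      intro x
      rw [hQ, hmean x, hmean2 x]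
      congr 1
      rw [← h1pe, Real.log_div hpbar0.ne' hp.ne']
      linear_combination (pbar * (1 - pbar) * (A - B + s * (Real.log pbar - Real.log p))) * hABd
    rw [Vsa, Finset.sum_congr rfl fun x _ => hrow x, Finset.sum_const, Finset.card_univ, hn,
      nsmul_eq_mul, ← mul_assoc, mul_inv_cancel₀ hn0.ne', one_mul]
  refine ⟨hIML, hVsa, ?_⟩
  intro hs' r hr
  have hL : 0 < Real.log pbar - Real.log p := by
    have := Real.log_lt_log hp hpp; linarith
  have hsqrtV : Real.sqrt (Vsa Q Wh s (fun _ => 0))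
      = s * (Real.log pbar - Real.log p) * Real.sqrt (pbar * (1 - pbar)) := by
    rw [hVsa, Real.log_div hpbar0.ne' hp.ne',
      show s ^ 2 * pbar * (1 - pbar) * (Real.log pbar - Real.log p) ^ 2
        = (s * (Real.log pbar - Real.log p)) ^ 2 * (pbar * (1 - pbar)) by ring,
      Real.sqrt_mul (sq_nonneg _), Real.sqrt_sq (by positivity)]
  have hXne : s * (Real.log pbar - Real.log p) ≠ 0 := by positivity
  have hphi : ∀ x y : 𝓧, phiSA Q Wh s (fun _ => 0) x y
      = if y = x then Real.sqrt ((1 - pbar) / pbar) else -Real.sqrt (pbar / (1 - pbar)) := by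
    intro x y
    rw [phiSA, hmean x, hiDen, hsqrtV]
    by_cases h : y = x
    · rw [if_pos h, if_pos h]
      have hnum : A - (pbar * A + ((n:ℝ) - 1) * p * B)
          = (s * (Real.log pbar - Real.log p)) * (1 - pbar) := by
        rw [← h1pe]; linear_combination (1 - pbar) * hABd
      rw [hnum, mul_div_mul_left _ _ hXne]
      exact sqrtAux1 hpbar0 h1p
    · rw [if_neg h, if_neg h]
      have hnum : B - (pbar * A + ((n:ℝ) - 1) * p * B)
          = (s * (Real.log pbar - Real.log p)) * (-pbar) := by
        rw [← h1pe]; linear_combination (-pbar) * hABd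
      rw [hnum, mul_div_mul_left _ _ hXne, neg_div]
      rw [mul_comm pbar (1 - pbar)]
      rw [sqrtAux1 h1p hpbar0]
  have key0 : pbar * Real.sqrt ((1 - pbar) / pbar) = Real.sqrt (pbar * (1 - pbar)) :=
    sqrtAux2 hpbar0 h1p
  have key1 : (1 - pbar) * Real.sqrt (pbar / (1 - pbar)) = Real.sqrt (pbar * (1 - pbar)) := by
    rw [sqrtAux2 h1p hpbar0, mul_comm]
  have hsq2r : Real.sqrt (2 * r) ^ 2 = 2 * r := Real.sq_sqrt (by linarith)
  have hc2sq : Real.sqrt (pbar * (1 - pbar)) ^ 2 = pbar * (1 - pbar) :=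
    Real.sq_sqrt (by positivity)
  have hc1sq : Real.sqrt (pbar / (1 - pbar)) ^ 2 = pbar / (1 - pbar) :=
    Real.sq_sqrt (by positivity)
  obtain ⟨q, hq_def⟩ : ∃ q : ℝ, q = p * (1 + Real.sqrt (2 * r) * Real.sqrt (pbar / (1 - pbar))) := ⟨_, rfl⟩
  have hq0 : 0 ≤ q := by rw [hq_def]; positivity
  have hdiag2 : 1 - ((n:ℝ) - 1) * q
      = pbar - Real.sqrt (2 * r) * Real.sqrt (pbar * (1 - pbar)) := by
    rw [hq_def]
    linear_combination (-Real.sqrt (2 * r)) * key1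
      + (1 + Real.sqrt (2 * r) * Real.sqrt (pbar / (1 - pbar))) * h1pe
  have hW : ∀ x y : 𝓧, Wstar Q Wh s (fun _ => 0) r x y
      = if y = x then 1 - ((n:ℝ) - 1) * q else q := by
    intro x y
    simp only [Wstar]
    rw [hWh, hphi]
    by_cases h : y = x
    · rw [if_pos h, if_pos h, if_pos h, hdiag2]
      linear_combination (-Real.sqrt (2 * r)) * key0
    · rw [if_neg h, if_neg h, if_neg h, hq_def]
      ring
  have hdiagW : ∀ x : 𝓧, Wstar Q Wh s (fun _ => 0) r x x
      = pbar - Real.sqrt (2 * r) * Real.sqrt (pbar * (1 - pbar)) := by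
    intro x; rw [hW x x, if_pos rfl, hdiag2]
  have hWsum : ∀ x : 𝓧, ∑ y : 𝓧, Wstar Q Wh s (fun _ => 0) r x y = 1 := by
    intro x
    rw [Finset.sum_congr rfl fun y _ => hW x y, sumIteCard x _ _, hn]
    ring
  have hiff : IsCondPMF (Wstar Q Wh s (fun _ => 0) r) ↔ r ≤ pbar / (2 * (1 - pbar)) := by
    constructor
    · intro hpmf
      obtain ⟨x0⟩ := (inferInstance : Nonempty 𝓧)
      have h0 := hpmf.1 x0 x0
      rw [hdiagW x0] at h0
      have hle : Real.sqrt (2 * r) * Real.sqrt (pbar * (1 - pbar)) ≤ pbar := by linarith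
      have h0' : 0 ≤ Real.sqrt (2 * r) * Real.sqrt (pbar * (1 - pbar)) := by positivity
      have hsq : 2 * r * (pbar * (1 - pbar)) ≤ pbar ^ 2 := by
        have h7 := mul_le_mul hle hle h0' hpbar0.le
        calc 2 * r * (pbar * (1 - pbar))
            = Real.sqrt (2 * r) ^ 2 * Real.sqrt (pbar * (1 - pbar)) ^ 2 := by
              rw [hsq2r, hc2sq]
          _ = (Real.sqrt (2 * r) * Real.sqrt (pbar * (1 - pbar)))
              * (Real.sqrt (2 * r) * Real.sqrt (pbar * (1 - pbar))) := by ring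
          _ ≤ pbar * pbar := h7
          _ = pbar ^ 2 := by ring
      rw [le_div_iff₀ (by linarith : (0:ℝ) < 2 * (1 - pbar))]
      have h8 : (r * (2 * (1 - pbar))) * pbar ≤ pbar * pbar := by
        calc (r * (2 * (1 - pbar))) * pbar = 2 * r * (pbar * (1 - pbar)) := by ring
          _ ≤ pbar ^ 2 := hsq
          _ = pbar * pbar := by ring
      exact le_of_mul_le_mul_right h8 hpbar0
    · intro hr2
      have hsq : 2 * r * (pbar * (1 - pbar)) ≤ pbar ^ 2 := by
        rw [le_div_iff₀ (by linarith : (0:ℝ) < 2 * (1 - pbar))] at hr2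
        calc 2 * r * (pbar * (1 - pbar)) = (r * (2 * (1 - pbar))) * pbar := by ring
          _ ≤ pbar * pbar := mul_le_mul_of_nonneg_right hr2 hpbar0.le
          _ = pbar ^ 2 := by ring
      have hle : Real.sqrt (2 * r) * Real.sqrt (pbar * (1 - pbar)) ≤ pbar := by
        rw [← Real.sqrt_mul (by linarith) (pbar * (1 - pbar))]
        calc Real.sqrt (2 * r * (pbar * (1 - pbar))) ≤ Real.sqrt (pbar ^ 2) :=
              Real.sqrt_le_sqrt hsq
          _ = pbar := Real.sqrt_sq hpbar0.le
      refine ⟨fun x y => ?_, hWsum⟩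
      rw [hW x y]
      split
      · rw [hdiag2]; linarith
      · exact hq0
  refine ⟨fun x y => by rw [hW x y, hq_def], hiff, ?_⟩
  intro hr2
  have hpmfW : IsCondPMF (Wstar Q Wh s (fun _ => 0) r) := hiff.mpr hr2
  have hn1 : ((n:ℝ) - 1) ≠ 0 := by linarith
  -- chi-squared value of Wstar
  have hchirow : ∀ x : 𝓧, ∑ y : 𝓧, Q x * (Wstar Q Wh s (fun _ => 0) r x y - Wh x y) ^ 2
      / Wh x y = (n:ℝ)⁻¹ * (2 * r) := by
    intro x
    have hterm : ∀ y : 𝓧, Q x * (Wstar Q Wh s (fun _ => 0) r x y - Wh x y) ^ 2 / Wh x y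
        = if y = x then (n:ℝ)⁻¹ * (2 * r * (1 - pbar))
          else (n:ℝ)⁻¹ * (2 * r * (pbar / ((n:ℝ) - 1))) := by
      intro y
      rw [hW x y, hWh, hQ]
      by_cases h : y = x
      · rw [if_pos h, if_pos h, if_pos h,
          show 1 - ((n:ℝ) - 1) * q - pbar
            = -(Real.sqrt (2 * r) * Real.sqrt (pbar * (1 - pbar))) by
              linear_combination hdiag2,
          neg_pow, mul_pow, hsq2r, hc2sq]
        field_simp
      · rw [if_neg h, if_neg h, if_neg h,
          show q - p = p * (Real.sqrt (2 * r) * Real.sqrt (pbar / (1 - pbar))) by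
            rw [hq_def]; ring,
          mul_pow, mul_pow, hsq2r, hc1sq, h1pe]
        field_simp
    rw [Finset.sum_congr rfl fun y _ => hterm y, sumIteCard x _ _, hn]
    field_simp
    ring
  have hball : Wstar Q Wh s (fun _ => 0) r ∈ chiBall Q Wh r := by
    refine ⟨hpmfW, ?_⟩
    rw [Finset.sum_congr rfl fun x _ => hchirow x, Finset.sum_const, Finset.card_univ, hn,
      nsmul_eq_mul]
    have h4 : (n:ℝ) * (n:ℝ)⁻¹ = 1 := mul_inv_cancel₀ hn0.ne'
    have heq : (1/2 : ℝ) * ((n:ℝ) * ((n:ℝ)⁻¹ * (2 * r))) = r := by linear_combination r * h4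
    linarith [heq]
  refine ⟨hball, ?_⟩
  -- optimality
  intro P hP
  obtain ⟨⟨hP0, hP1⟩, hPball⟩ := hP
  have hABpos : 0 < A - B := by rw [hABd]; positivity
  have hobj : ∀ (R : 𝓧 → 𝓧 → ℝ), (∀ x, ∑ y : 𝓧, R x y = 1) →
      (∑ x : 𝓧, ∑ y : 𝓧, Q x * R x y * iDen Q Wh s (fun _ => 0) x y)
        = B + (A - B) * ((n:ℝ)⁻¹ * ∑ x : 𝓧, R x x) := by
    intro R hR
    have hin : ∀ x : 𝓧, ∑ y : 𝓧, Q x * R x y * iDen Q Wh s (fun _ => 0) x y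
        = (n:ℝ)⁻¹ * B + (n:ℝ)⁻¹ * ((A - B) * R x x) := by
      intro x
      have h1 : ∀ y : 𝓧, Q x * R x y * iDen Q Wh s (fun _ => 0) x y
          = (n:ℝ)⁻¹ * (R x y * B) + (n:ℝ)⁻¹ * (if y = x then R x y * (A - B) else 0) := by
        intro y; rw [hQ, hiDen]; split <;> ring
      rw [Finset.sum_congr rfl fun y _ => h1 y, Finset.sum_add_distrib, ← Finset.mul_sum,
        ← Finset.mul_sum, ← Finset.sum_mul, hR x, Finset.sum_ite_eq' Finset.univ x]
      simp only [Finset.mem_univ, if_true, one_mul]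
      ring
    rw [Finset.sum_congr rfl fun x _ => hin x, Finset.sum_add_distrib, Finset.sum_const,
      Finset.card_univ, hn, nsmul_eq_mul, ← Finset.mul_sum]
    simp_rw [← Finset.mul_sum]
    rw [← mul_assoc, mul_inv_cancel₀ hn0.ne', one_mul]
    ring
  -- per-row chi-squared lower bound for P
  have hrowP : ∀ x : 𝓧, (pbar - P x x) ^ 2
      ≤ pbar * (1 - pbar) * ∑ y : 𝓧, (P x y - Wh x y) ^ 2 / Wh x y := by
    intro x
    have hcard : (((Finset.univ.erase x).card : ℕ) : ℝ) = (n:ℝ) - 1 := by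
      rw [Finset.card_erase_of_mem (Finset.mem_univ x), Finset.card_univ, hn,
        Nat.cast_sub (by omega), Nat.cast_one]
    have hsplit : ∑ y : 𝓧, (P x y - Wh x y) ^ 2 / Wh x y
        = (P x x - pbar) ^ 2 / pbar + ∑ y ∈ Finset.univ.erase x, (P x y - p) ^ 2 / p := by
      rw [← Finset.add_sum_erase Finset.univ _ (Finset.mem_univ x)]
      congr 1
      · rw [hWh, if_pos rfl]
      · exact Finset.sum_congr rfl fun y hy => by
          rw [hWh, if_neg (Finset.ne_of_mem_erase hy)]
    have hadd := Finset.add_sum_erase Finset.univ (fun y => P x y) (Finset.mem_univ x)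
    rw [hP1 x] at hadd
    have hsum1 : ∑ y ∈ Finset.univ.erase x, (P x y - p) = pbar - P x x := by
      rw [Finset.sum_sub_distrib, Finset.sum_const, nsmul_eq_mul, hcard, hpbar]
      linarith
    have hCS := sq_sum_le_card_mul_sum_sq (s := Finset.univ.erase x)
      (f := fun y => P x y - p)
    rw [hsum1, hcard] at hCS
    obtain ⟨S2, hS2⟩ : ∃ S2 : ℝ, S2 = ∑ y ∈ Finset.univ.erase x, (P x y - p) ^ 2 := ⟨_, rfl⟩
    rw [← hS2] at hCS
    have hS2nn : 0 ≤ S2 := hS2 ▸ Finset.sum_nonneg fun y _ => sq_nonneg _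
    have hsumdiv : ∑ y ∈ Finset.univ.erase x, (P x y - p) ^ 2 / p = S2 / p := by
      rw [hS2, Finset.sum_div]
    rw [hsplit, hsumdiv]
    have e1 : pbar * (1 - pbar) * ((P x x - pbar) ^ 2 / pbar + S2 / p)
        = (1 - pbar) * (P x x - pbar) ^ 2 + pbar * (((n:ℝ) - 1) * S2) := by
      rw [h1pe]
      field_simp
    rw [e1]
    have h9 := mul_le_mul_of_nonneg_left hCS hpbar0.le
    have h10 : (P x x - pbar) ^ 2 = (pbar - P x x) ^ 2 := by ring
    have h11 : 0 ≤ (pbar - P x x) ^ 2 := sq_nonneg _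
    rw [h10]
    linarith
  -- total chi-squared bound
  have hchiP : ∑ x : 𝓧, ∑ y : 𝓧, (P x y - Wh x y) ^ 2 / Wh x y ≤ 2 * r * (n:ℝ) := by
    have h3 : (1 / 2) * ((n:ℝ)⁻¹ * ∑ x : 𝓧, ∑ y : 𝓧, (P x y - Wh x y) ^ 2 / Wh x y) ≤ r := by
      calc (1 / 2) * ((n:ℝ)⁻¹ * ∑ x : 𝓧, ∑ y : 𝓧, (P x y - Wh x y) ^ 2 / Wh x y)
          = (1 / 2) * ∑ x : 𝓧, ∑ y : 𝓧, Q x * (P x y - Wh x y) ^ 2 / Wh x y := by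
            rw [Finset.mul_sum]
            congr 1
            refine Finset.sum_congr rfl fun x _ => ?_
            rw [Finset.mul_sum]
            exact Finset.sum_congr rfl fun y _ => by rw [hQ, mul_div_assoc]
        _ ≤ r := hPball
    have h5 := mul_le_mul_of_nonneg_left h3 (by positivity : (0:ℝ) ≤ 2 * (n:ℝ))
    have h6 : 2 * (n:ℝ) * ((1 / 2) * ((n:ℝ)⁻¹
        * ∑ x : 𝓧, ∑ y : 𝓧, (P x y - Wh x y) ^ 2 / Wh x y))
        = ∑ x : 𝓧, ∑ y : 𝓧, (P x y - Wh x y) ^ 2 / Wh x y := by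
      field_simp
    rw [h6] at h5
    linarith
  have hsumsq : ∑ x : 𝓧, (pbar - P x x) ^ 2 ≤ pbar * (1 - pbar) * (2 * r * (n:ℝ)) := by
    calc ∑ x : 𝓧, (pbar - P x x) ^ 2
        ≤ ∑ x : 𝓧, pbar * (1 - pbar) * ∑ y : 𝓧, (P x y - Wh x y) ^ 2 / Wh x y :=
          Finset.sum_le_sum fun x _ => hrowP x
      _ = pbar * (1 - pbar) * ∑ x : 𝓧, ∑ y : 𝓧, (P x y - Wh x y) ^ 2 / Wh x y := by
          rw [Finset.mul_sum]
      _ ≤ pbar * (1 - pbar) * (2 * r * (n:ℝ)) := by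
          exact mul_le_mul_of_nonneg_left hchiP (by positivity)
  obtain ⟨Sd, hSd⟩ : ∃ Sd : ℝ, Sd = ∑ x : 𝓧, (pbar - P x x) := ⟨_, rfl⟩
  obtain ⟨Y, hY⟩ : ∃ Y : ℝ, Y = (n:ℝ) * (Real.sqrt (2 * r) * Real.sqrt (pbar * (1 - pbar))) := ⟨_, rfl⟩
  have hY0 : 0 ≤ Y := by rw [hY]; positivity
  have hSd2 : Sd ^ 2 ≤ (n:ℝ) * ∑ x : 𝓧, (pbar - P x x) ^ 2 := by
    have h5 := sq_sum_le_card_mul_sum_sq (s := (Finset.univ : Finset 𝓧))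
      (f := fun x => pbar - P x x)
    rw [Finset.card_univ, hn] at h5
    rw [hSd]
    exact_mod_cast h5
  have hY2 : Y ^ 2 = (n:ℝ) ^ 2 * (2 * r) * (pbar * (1 - pbar)) := by
    rw [hY, mul_pow, mul_pow, hsq2r, hc2sq]
    ring
  have hSdY : Sd ≤ Y := by
    have hSd2' : Sd ^ 2 ≤ Y ^ 2 := by
      rw [hY2]
      calc Sd ^ 2 ≤ (n:ℝ) * ∑ x : 𝓧, (pbar - P x x) ^ 2 := hSd2
        _ ≤ (n:ℝ) * (pbar * (1 - pbar) * (2 * r * (n:ℝ))) :=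
            mul_le_mul_of_nonneg_left hsumsq hn0.le
        _ = (n:ℝ) ^ 2 * (2 * r) * (pbar * (1 - pbar)) := by ring
    calc Sd ≤ |Sd| := le_abs_self _
      _ = Real.sqrt (Sd ^ 2) := (Real.sqrt_sq_eq_abs Sd).symm
      _ ≤ Real.sqrt (Y ^ 2) := Real.sqrt_le_sqrt hSd2'
      _ = Y := Real.sqrt_sq hY0
  have hSW : ∑ x : 𝓧, Wstar Q Wh s (fun _ => 0) r x x = (n:ℝ) * pbar - Y := by
    rw [Finset.sum_congr rfl fun x _ => hdiagW x, Finset.sum_const, Finset.card_univ, hn,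
      nsmul_eq_mul, hY]
    ring
  have hSP : ∑ x : 𝓧, P x x = (n:ℝ) * pbar - Sd := by
    rw [hSd, Finset.sum_sub_distrib, Finset.sum_const, Finset.card_univ, hn, nsmul_eq_mul]
    ring
  have hOW := hobj (Wstar Q Wh s (fun _ => 0) r) hWsum
  have hOP := hobj P hP1
  rw [hOW, hOP, hSW, hSP]
  have hmono : (n:ℝ) * pbar - Y ≤ (n:ℝ) * pbar - Sd := sub_le_sub_left hSdY _
  have hcoef : 0 ≤ (A - B) * (n:ℝ)⁻¹ :=
    mul_nonneg hABpos.le (inv_nonneg.mpr hn0.le)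
  have h12 := mul_le_mul_of_nonneg_left hmono hcoef
  calc B + (A - B) * ((n:ℝ)⁻¹ * ((n:ℝ) * pbar - Y))
      = B + (A - B) * (n:ℝ)⁻¹ * ((n:ℝ) * pbar - Y) := by ring
    _ ≤ B + (A - B) * (n:ℝ)⁻¹ * ((n:ℝ) * pbar - Sd) := add_le_add_right h12 B
    _ = B + (A - B) * ((n:ℝ)⁻¹ * ((n:ℝ) * pbar - Sd)) := by ring
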